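/- For every real x > 0 the equation x = (a·e^{L/j} + 3/4)·L has exactly one solution L(x) > 0, and lim_{x→∞} L(x) / (j·log(x/log x)) = 1. -/

import Mathlib

open Filter

lemma aux_mono (a : ℝ) (ha : 0 < a) (j : ℕ) (hj : 1 ≤ j) :
    StrictMonoOn (fun L : ℝ => (a * Real.exp (L / j) + 3 / 4) * L) (Set.Ici 0) := by
  have jpos : (0:ℝ) < j := by exact_mod_cast hj
  intro L1 h1 L2 h2 h12
  have hA1 : a * Real.exp (L1 / j) + 3 / 4 ≤ a * Real.exp (L2 / j) + 3 / 4 := by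
    have : Real.exp (L1 / j) ≤ Real.exp (L2 / j) :=
      Real.exp_le_exp.2 (by gcongr)
    nlinarith
  have hA2 : 0 < a * Real.exp (L2 / j) + 3 / 4 := by positivity
  exact mul_lt_mul' hA1 h12 h1 hA2

lemma aux_asymp (a : ℝ) (ha : 0 < a) (j : ℕ) (hj : 1 ≤ j) (L : ℝ → ℝ)
    (hL : ∀ x : ℝ, 0 < x → 0 < L x ∧ x = (a * Real.exp (L x / j) + 3 / 4) * L x) :
    Tendsto (fun x : ℝ => L x / (j * Real.log (x / Real.log x))) atTop (nhds 1) := by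
  have jpos : (0:ℝ) < j := by exact_mod_cast hj
  have j1 : (1:ℝ) ≤ j := by exact_mod_cast hj
  set c : ℝ → ℝ := fun x => Real.log (a + 3 / 4 * Real.exp (-(L x / j))) with hc
  -- key identity
  have key : ∀ x : ℝ, 0 < x →
      Real.log x = L x / j + Real.log (L x) + c x := by
    intro x hx
    obtain ⟨hpos, heq⟩ := hL x hx
    have hfac : a * Real.exp (L x / j) + 3 / 4
        = (a + 3 / 4 * Real.exp (-(L x / j))) * Real.exp (L x / j) := by
      have h1 : Real.exp (-(L x / j)) * Real.exp (L x / j) = 1 := by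
        rw [← Real.exp_add]; simp
      nlinarith
    have hb : 0 < a + 3 / 4 * Real.exp (-(L x / j)) := by positivity
    have h2 : x = (a + 3 / 4 * Real.exp (-(L x / j))) * Real.exp (L x / j) * L x := by
      conv_lhs => rw [heq]
      rw [hfac]
    conv_lhs => rw [h2]
    rw [Real.log_mul (by positivity) hpos.ne',
        Real.log_mul hb.ne' (Real.exp_pos _).ne', Real.log_exp, hc]
    ring
  -- bounds on c
  have cbound : ∀ x : ℝ, 0 < x →
      Real.log a ≤ c x ∧ c x ≤ Real.log (a + 3 / 4) := by
    intro x hx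
    obtain ⟨hpos, _⟩ := hL x hx
    have hu : 0 ≤ L x / j := by positivity
    have he1 : Real.exp (-(L x / j)) ≤ 1 := Real.exp_le_one_iff.2 (by linarith)
    have he0 : 0 < Real.exp (-(L x / j)) := Real.exp_pos _
    constructor
    · exact Real.log_le_log ha (by nlinarith)
    · exact Real.log_le_log (by positivity) (by nlinarith)
  -- L tends to infinity
  have hLtop : Tendsto L atTop atTop := by
    rw [tendsto_atTop]
    intro M
    set M' := max M 0 with hM'
    filter_upwards [eventually_gt_atTop (max 0 ((a * Real.exp (M' / j) + 3 / 4) * M')),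
      eventually_gt_atTop 0] with x hx hx0
    obtain ⟨hpos, heq⟩ := hL x hx0
    by_contra h
    push_neg at h
    have hLM : L x ≤ M' := le_trans h.le (le_max_left _ _)
    have := (aux_mono a ha j hj).monotoneOn hpos.le (le_max_right M 0) hLM
    have : x ≤ (a * Real.exp (M' / j) + 3 / 4) * M' := by rw [heq]; exact this
    have := lt_of_le_of_lt this (lt_of_le_of_lt (le_max_right 0 _) hx)
    exact lt_irrefl x this
  -- little-o fact
  have hlittle : Tendsto (fun x : ℝ => Real.log (Real.log x) / Real.log x) atTop (nhds 0) :=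
    (Real.isLittleO_log_id_atTop.tendsto_div_nhds_zero).comp Real.tendsto_log_atTop
  set c₁ := Real.log a with hc₁
  set c₂ := Real.log (a + 3 / 4) with hc₂
  set K := Real.log (2 * j) + c₂ with hK
  have ev0 : ∀ᶠ x : ℝ in atTop, 0 < x := eventually_gt_atTop 0
  have ev1 : ∀ᶠ x : ℝ in atTop, 1 ≤ Real.log x := Real.tendsto_log_atTop.eventually_ge_atTop 1
  have ev2 : ∀ᶠ x : ℝ in atTop, 1 ≤ L x := hLtop.eventually_ge_atTop 1
  have ev3 : ∀ᶠ x : ℝ in atTop, -c₁ ≤ Real.log x := Real.tendsto_log_atTop.eventually_ge_atTop _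
  have E2 : ∀ᶠ x : ℝ in atTop, L x ≤ 2 * j * Real.log x := by
    filter_upwards [ev0, ev1, ev2, ev3] with x hx h1 h2 h3
    have hk := key x hx
    have hcb := (cbound x hx).1
    have hlogL : 0 ≤ Real.log (L x) := Real.log_nonneg h2
    have hq : L x / j ≤ 2 * Real.log x := by linarith
    calc L x = (L x / j) * j := by field_simp
    _ ≤ (2 * Real.log x) * j := mul_le_mul_of_nonneg_right hq jpos.le
    _ = 2 * j * Real.log x := by ring
  have E3 : ∀ᶠ x : ℝ in atTop, Real.log (L x) ≤ Real.log (2 * j) + Real.log (Real.log x) := by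
    filter_upwards [ev0, ev1, E2] with x hx h1 h2
    have hpos := (hL x hx).1
    have := Real.log_le_log hpos h2
    rwa [Real.log_mul (by positivity) (by linarith)] at this
  have E4 : ∀ᶠ x : ℝ in atTop, Real.log x - Real.log (Real.log x) - K ≤ L x / j := by
    filter_upwards [ev0, E3] with x hx h3
    have hk := key x hx
    have hcb := (cbound x hx).2
    linarith
  have ev4 : ∀ᶠ x : ℝ in atTop, Real.log (Real.log x) ≤ (1/4) * Real.log x := by
    filter_upwards [ev1,
      hlittle.eventually (eventually_le_nhds (by norm_num : (0:ℝ) < 1/4))] with x h1 h2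
    have hlx : (0:ℝ) < Real.log x := by linarith
    calc Real.log (Real.log x)
        = (Real.log (Real.log x) / Real.log x) * Real.log x := by field_simp
    _ ≤ (1/4) * Real.log x := mul_le_mul_of_nonneg_right h2 hlx.le
  have ev5 : ∀ᶠ x : ℝ in atTop, K ≤ (1/4) * Real.log x := by
    have h : Tendsto (fun x : ℝ => (1/4) * Real.log x) atTop atTop :=
      Real.tendsto_log_atTop.const_mul_atTop (by norm_num)
    exact h.eventually_ge_atTop K
  have E5 : ∀ᶠ x : ℝ in atTop, (1/2) * Real.log x ≤ L x := by
    filter_upwards [E4, ev4, ev5, ev1] with x h4 h5 h6 h1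
    have hhalf : (1/2) * Real.log x ≤ L x / j := by linarith
    have hmul := (le_div_iff₀ jpos).mp hhalf
    nlinarith
  have E6 : ∀ᶠ x : ℝ in atTop, Real.log (Real.log x) - Real.log 2 ≤ Real.log (L x) := by
    filter_upwards [E5, ev1] with x h5 h1
    have hlx : (0:ℝ) < Real.log x := by linarith
    have h := Real.log_le_log (by positivity) h5
    rwa [Real.log_mul (by norm_num) hlx.ne',
      show Real.log (1/2) = -Real.log 2 by
        rw [show (1/2:ℝ) = 2⁻¹ by norm_num, Real.log_inv], neg_add_eq_sub] at h
  have EA : ∀ᶠ x : ℝ in atTop,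
      L x / j ≤ Real.log x - Real.log (Real.log x) + (Real.log 2 - c₁) := by
    filter_upwards [ev0, E6] with x hx h6
    have hk := key x hx
    have hcb := (cbound x hx).1
    linarith
  set D := max (max (Real.log 2 - c₁) K) 1 with hD
  have hD1 : (1:ℝ) ≤ D := le_max_right _ _
  have EF : ∀ᶠ x : ℝ in atTop,
      |L x / j - (Real.log x - Real.log (Real.log x))| ≤ D := by
    filter_upwards [EA, E4] with x hA h4
    rw [abs_le]
    constructor
    · have hKD : K ≤ D := le_trans (le_max_right _ _) (le_max_left _ _)
      linarith
    · have hcD : Real.log 2 - c₁ ≤ D := le_trans (le_max_left _ _) (le_max_left _ _)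
      linarith
  have hTtop : Tendsto (fun x : ℝ => Real.log x - Real.log (Real.log x)) atTop atTop := by
    refine tendsto_atTop_mono' atTop ?_
      (Real.tendsto_log_atTop.const_mul_atTop (by norm_num : (0:ℝ) < 3/4))
    filter_upwards [ev4] with x h4
    linarith
  have hTev : ∀ᶠ x : ℝ in atTop,
      Real.log (x / Real.log x) = Real.log x - Real.log (Real.log x) := by
    filter_upwards [ev0, ev1] with x hx h1
    rw [Real.log_div hx.ne' (by linarith : Real.log x ≠ 0)]
  have hDiv : Tendsto (fun x : ℝ => D / (Real.log x - Real.log (Real.log x))) atTop (nhds 0) :=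
    tendsto_const_nhds.div_atTop hTtop
  have h0 : Tendsto (fun x : ℝ => L x / (j * Real.log (x / Real.log x)) - 1) atTop (nhds 0) := by
    apply squeeze_zero_norm' ?_ hDiv
    filter_upwards [EF, hTev, hTtop.eventually_ge_atTop 1] with x hF hT hT1
    rw [hT]
    set T := Real.log x - Real.log (Real.log x) with hTdef
    have hTpos : (0:ℝ) < T := by linarith
    have heq2 : L x / (j * T) - 1 = (L x / j - T) / T := by
      field_simp
    rw [heq2, Real.norm_eq_abs, abs_div, abs_of_pos hTpos]
    gcongr
  have := h0.add (tendsto_const_nhds : Tendsto (fun _ : ℝ => (1:ℝ)) atTop (nhds 1))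
  simpa using this

lemma aux_exists (a : ℝ) (ha : 0 < a) (j : ℕ) (hj : 1 ≤ j) (x : ℝ) (hx : 0 < x) :
    ∃! L : ℝ, 0 < L ∧ x = (a * Real.exp (L / j) + 3 / 4) * L := by
  set f : ℝ → ℝ := fun L => (a * Real.exp (L / j) + 3 / 4) * L with hf
  have hcont : Continuous f := by fun_prop
  have hf0 : f 0 = 0 := by simp [hf]
  have hL0 : (0:ℝ) ≤ (4/3) * x := by positivity
  have hfL0 : x ≤ f ((4/3) * x) := by
    have h1 : 0 < Real.exp ((4/3)*x / j) := Real.exp_pos _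
    simp only [hf]
    nlinarith [mul_pos ha h1]
  obtain ⟨L, hLmem, hfL⟩ := intermediate_value_Icc hL0 hcont.continuousOn
    ⟨by rw [hf0]; exact hx.le, hfL0⟩
  have hLpos : 0 < L := by
    rcases lt_or_eq_of_le hLmem.1 with h | h
    · exact h
    · exfalso; rw [← h, hf0] at hfL; linarith
  refine ⟨L, ⟨hLpos, hfL.symm⟩, ?_⟩
  rintro L' ⟨hL'pos, hL'eq⟩
  exact (aux_mono a ha j hj).injOn hL'pos.le hLpos.le (by rw [← hL'eq]; exact hfL.symm)

/-- For every `x > 0` the equation `x = (a e^{L/j} + 3/4) L` has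
exactly one positive solution `L(x)`, and `L(x) ∼ j log(x / log x)` as `x → ∞`. -/
theorem dedekind_saddle_point_solution
    (a : ℝ) (ha : 0 < a) (j : ℕ) (hj : 1 ≤ j) :
    (∀ x : ℝ, 0 < x → ∃! L : ℝ, 0 < L ∧
      x = (a * Real.exp (L / j) + 3 / 4) * L) ∧
    ∀ L : ℝ → ℝ,
      (∀ x : ℝ, 0 < x → 0 < L x ∧ x = (a * Real.exp (L x / j) + 3 / 4) * L x) →
      Tendsto (fun x : ℝ => L x / (j * Real.log (x / Real.log x))) atTop (nhds 1) := by
  exact ⟨fun x hx => aux_exists a ha j hj x hx, fun L hL => aux_asymp a ha j hj L hL⟩
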